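/- Let k ≥ 0 and let a : Fin (2k+1) → ℝ/ℤ be injective. If σ and τ are permutations of Fin (2k+1) such that both a ∘ σ and a ∘ τ are in cyclic order, then sign σ = sign τ (as elements of {±1}). -/

import Mathlib

noncomputable section

instance : Fact ((0:ℝ) < 1) := ⟨one_pos⟩

/-- The circle `ℝ/ℤ`. -/
abbrev S1 := AddCircle (1 : ℝ)

/-- A tuple of points on the circle is in cyclic order if every increasing triple of
indices gives points in strict circular betweenness. -/
def InCyclicOrder {m : ℕ} (b : Fin m → S1) : Prop :=
  ∀ i j l : Fin m, i < j → j < l → sbtw (b i) (b j) (b l)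

open Fin.NatCast in
private lemma rot_pow_apply (n m : ℕ) :
    ∀ i : Fin (n + 1), ((finRotate (n + 1)) ^ m) i = i + (m : Fin (n + 1)) := by
  induction m with
  | zero => simp
  | succ m ih =>
    intro i
    rw [pow_succ, Equiv.Perm.mul_apply, finRotate_succ_apply, ih, Nat.cast_add, Nat.cast_one,
      add_assoc, add_comm (1 : Fin (n+1)) _]

theorem stmt1 (k : ℕ) (a : Fin (2 * k + 1) → S1) (ha : Function.Injective a)
    (σ τ : Equiv.Perm (Fin (2 * k + 1)))
    (hσ : InCyclicOrder (a ∘ σ)) (hτ : InCyclicOrder (a ∘ τ)) :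
    Equiv.Perm.sign σ = Equiv.Perm.sign τ := by
  set π : Equiv.Perm (Fin (2 * k + 1)) := τ⁻¹ * σ with hπdef
  have hστ : σ = τ * π := by rw [hπdef]; group
  set b : Fin (2 * k + 1) → S1 := a ∘ τ with hb
  have hbπ : ∀ i j l : Fin (2 * k + 1), i < j → j < l →
      sbtw (b (π i)) (b (π j)) (b (π l)) := by
    intro i j l hij hjl
    have h := hσ i j l hij hjl
    simpa [hb, hπdef, Function.comp, Equiv.Perm.mul_apply] using h
  -- characterization of sbtw for points of a cyclically ordered tuple
  have key : ∀ x y z : Fin (2 * k + 1), sbtw (b x) (b y) (b z) →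
      (x < y ∧ y < z) ∨ (y < z ∧ z < x) ∨ (z < x ∧ x < y) := by
    intro x y z h
    rcases lt_trichotomy x y with hxy | rfl | hxy
    · rcases lt_trichotomy y z with hyz | rfl | hyz
      · exact Or.inl ⟨hxy, hyz⟩
      · exact absurd h sbtw_irrefl_right
      · rcases lt_trichotomy x z with hxz | rfl | hxz
        · exact absurd h.cyclic_left (sbtw_asymm (hτ x z y hxz hyz))
        · exact absurd h sbtw_irrefl_left_right
        · exact Or.inr (Or.inr ⟨hxz, hxy⟩)
    · exact absurd h sbtw_irrefl_left
    · rcases lt_trichotomy y z with hyz | rfl | hyz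
      · rcases lt_trichotomy x z with hxz | rfl | hxz
        · exact absurd h.cyclic_right (sbtw_asymm (hτ y x z hxy hxz))
        · exact absurd h sbtw_irrefl_left_right
        · exact Or.inr (Or.inl ⟨hyz, hxz⟩)
      · exact absurd h sbtw_irrefl_right
      · exact absurd h (sbtw_asymm (hτ z y x hyz hxy))
  have hcyc : ∀ i j l : Fin (2 * k + 1), i < j → j < l →
      (π i < π j ∧ π j < π l) ∨ (π j < π l ∧ π l < π i) ∨ (π l < π i ∧ π i < π j) :=
    fun i j l hij hjl => key _ _ _ (hbπ i j l hij hjl)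
  set c : Fin (2 * k + 1) := π 0 with hc
  set g : Fin (2 * k + 1) → Fin (2 * k + 1) := fun i => π i - c with hg
  have hsub : ∀ x : Fin (2 * k + 1),
      (x - c).val = if c ≤ x then x.val - c.val else 2 * k + 1 + x.val - c.val := by
    intro x
    split_ifs with h
    · exact Fin.sub_val_of_le h
    · exact Fin.coe_sub_iff_lt.mpr (lt_of_not_ge h)
  have hmono : StrictMono g := by
    intro i j hij
    by_cases hi0 : i = 0
    · subst hi0
      have h1 : g 0 = 0 := by simp [hg, hc]
      have h2 : π j ≠ c := fun h => (hij.ne' (π.injective h)).elim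
      rw [h1, Fin.lt_def, hg]
      have hx := hsub (π j)
      have hcn : c.val < 2 * k + 1 := c.isLt
      have hxn : (π j).val < 2 * k + 1 := (π j).isLt
      have hne : (π j).val ≠ c.val := fun h => h2 (Fin.ext h)
      simp only [Fin.val_zero]
      rw [hx]
      split_ifs with h
      · have : c.val ≤ (π j).val := h
        omega
      · have : ¬ c.val ≤ (π j).val := fun hh => h (Fin.le_def.mpr hh)
        omega
    · have hi : (0 : Fin (2 * k + 1)) < i := Fin.pos_of_ne_zero hi0
      have h3 := hcyc 0 i j hi hij
      rw [Fin.lt_def, hg]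
      have hx := hsub (π i)
      have hy := hsub (π j)
      have hxn : (π i).val < 2 * k + 1 := (π i).isLt
      have hyn : (π j).val < 2 * k + 1 := (π j).isLt
      simp only
      rw [hx, hy]
      rcases h3 with ⟨h4, h5⟩ | ⟨h4, h5⟩ | ⟨h4, h5⟩
      · -- c < π i < π j
        rw [if_pos h4.le, if_pos (h4.trans h5).le]
        have := Fin.lt_def.mp h4
        have := Fin.lt_def.mp h5
        omega
      · -- π i < π j < c
        rw [if_neg (not_le.mpr (h4.trans h5)), if_neg (not_le.mpr h5)]
        have := Fin.lt_def.mp h4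
        have := Fin.lt_def.mp h5
        omega
      · -- π j < c < π i
        rw [if_pos h5.le, if_neg (not_le.mpr h4)]
        have := Fin.lt_def.mp h4
        have := Fin.lt_def.mp h5
        omega
  have hsurj : Function.Surjective g := by
    intro y
    exact ⟨π.symm (y + c), by simp [hg]⟩
  have wf : WellFoundedLT (Fin (2 * k + 1)) := inferInstance
  have hid : g = id := by
    have h := @StrictMono.range_inj (Fin (2 * k + 1)) (Fin (2 * k + 1)) inferInstance
      inferInstance wf g id hmono strictMono_id
    rw [← h, Set.range_id, Set.range_eq_univ.mpr hsurj]
  have hπi : ∀ i : Fin (2 * k + 1), π i = i + c := by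
    intro i
    have : g i = i := by rw [hid]; rfl
    have h2 : π i - c = i := this
    rw [sub_eq_iff_eq_add] at h2
    exact h2
  have hπrot : π = (finRotate (2 * k + 1)) ^ (c.val) := by
    ext i
    rw [hπi i, rot_pow_apply (2 * k) c.val i, Fin.cast_val_eq_self]
  have hsignπ : Equiv.Perm.sign π = 1 := by
    rw [hπrot, map_pow, sign_finRotate, Nat.add_sub_cancel, pow_mul, neg_one_sq, one_pow, one_pow]
  rw [hστ, map_mul, hsignπ, mul_one]
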